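/- The function H : ℝ² → ℝ defined by H(x₁,x₂) = (x₁⁴ + 3x₁²x₂² + x₂⁴)^{1/4} is a Finsler norm: H is of class C² on ℝ²∖{0}, H(x) > 0 for x ≠ 0, H(sx) = |s|H(x) for all x and s ∈ ℝ, and the Hessian of H² (where H²(x₁,x₂) = √(x₁⁴ + 3x₁²x₂² + x₂⁴)) is positive definite at every point of ℝ²∖{0}. -/

import Mathlib

open Real

noncomputable abbrev pj (i : Fin 2) : (Fin 2 → ℝ) →L[ℝ] ℝ := ContinuousLinearMap.proj i

lemma qf_pos {y : Fin 2 → ℝ} (hy : y ≠ 0) :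
    0 < y 0 ^ 4 + 3 * y 0 ^ 2 * y 1 ^ 2 + y 1 ^ 4 := by
  obtain ⟨i, hi⟩ := Function.ne_iff.mp hy
  fin_cases i
  · have hi' : y 0 ≠ 0 := hi
    have h : 0 < y 0 ^ 4 := by positivity
    nlinarith [sq_nonneg (y 0 * y 1), sq_nonneg (y 1 ^ 2)]
  · have hi' : y 1 ≠ 0 := hi
    have h : 0 < y 1 ^ 4 := by positivity
    nlinarith [sq_nonneg (y 0 * y 1), sq_nonneg (y 0 ^ 2)]

lemma qf_hasFDerivAt (y : Fin 2 → ℝ) :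
    HasFDerivAt (fun z : Fin 2 → ℝ => z 0 ^ 4 + 3 * z 0 ^ 2 * z 1 ^ 2 + z 1 ^ 4)
      ((4 * y 0 ^ 3 + 6 * y 0 * y 1 ^ 2) • pj 0 + (6 * y 0 ^ 2 * y 1 + 4 * y 1 ^ 3) • pj 1) y := by
  have h0 : HasFDerivAt (fun z : Fin 2 → ℝ => z 0) (pj 0) y := (pj 0).hasFDerivAt
  have h1 : HasFDerivAt (fun z : Fin 2 → ℝ => z 1) (pj 1) y := (pj 1).hasFDerivAt
  have h0sq := h0.mul h0
  have h1sq := h1.mul h1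
  have h04 := h0sq.mul h0sq
  have h14 := h1sq.mul h1sq
  have hmid := (h0sq.mul h1sq).const_mul 3
  have e : (fun z : Fin 2 → ℝ => z 0 ^ 4 + 3 * z 0 ^ 2 * z 1 ^ 2 + z 1 ^ 4)
      = fun z : Fin 2 → ℝ => (z 0 * z 0) * (z 0 * z 0) + 3 * ((z 0 * z 0) * (z 1 * z 1))
          + (z 1 * z 1) * (z 1 * z 1) := by funext z; ring
  rw [e]
  refine ((h04.add hmid).add h14).congr_fderiv ?_
  ext z
  simp [ContinuousLinearMap.add_apply, ContinuousLinearMap.smul_apply,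
    ContinuousLinearMap.smulRight_apply, smul_eq_mul]
  ring

lemma nf_hasFDerivAt (v y : Fin 2 → ℝ) :
    HasFDerivAt (fun z : Fin 2 → ℝ =>
        (4 * z 0 ^ 3 + 6 * z 0 * z 1 ^ 2) * v 0 + (6 * z 0 ^ 2 * z 1 + 4 * z 1 ^ 3) * v 1)
      ((((12 * y 0 ^ 2 + 6 * y 1 ^ 2) * v 0 + 12 * y 0 * y 1 * v 1) • pj 0)
        + ((12 * y 0 * y 1 * v 0 + (6 * y 0 ^ 2 + 12 * y 1 ^ 2) * v 1) • pj 1)) y := by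
  have h0 : HasFDerivAt (fun z : Fin 2 → ℝ => z 0) (pj 0) y := (pj 0).hasFDerivAt
  have h1 : HasFDerivAt (fun z : Fin 2 → ℝ => z 1) (pj 1) y := (pj 1).hasFDerivAt
  have t1 := (((h0.mul h0).mul h0).const_mul 4).add ((h0.mul (h1.mul h1)).const_mul 6)
  have t2 := (((h0.mul h0).mul h1).const_mul 6).add (((h1.mul h1).mul h1).const_mul 4)
  have e : (fun z : Fin 2 → ℝ =>
        (4 * z 0 ^ 3 + 6 * z 0 * z 1 ^ 2) * v 0 + (6 * z 0 ^ 2 * z 1 + 4 * z 1 ^ 3) * v 1)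
      = fun z : Fin 2 → ℝ =>
        (4 * (z 0 * z 0 * z 0) + 6 * (z 0 * (z 1 * z 1))) * v 0
          + (6 * (z 0 * z 0 * z 1) + 4 * (z 1 * z 1 * z 1)) * v 1 := by funext z; ring
  rw [e]
  refine ((t1.mul_const (v 0)).add (t2.mul_const (v 1))).congr_fderiv ?_
  ext z
  simp [ContinuousLinearMap.add_apply, ContinuousLinearMap.smul_apply,
    ContinuousLinearMap.smulRight_apply, smul_eq_mul]
  ring

lemma qf_contDiff : ContDiff ℝ 2 (fun z : Fin 2 → ℝ => z 0 ^ 4 + 3 * z 0 ^ 2 * z 1 ^ 2 + z 1 ^ 4) := by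
  have c0 : ContDiff ℝ 2 (fun z : Fin 2 → ℝ => z 0) := (pj 0).contDiff
  have c1 : ContDiff ℝ 2 (fun z : Fin 2 → ℝ => z 1) := (pj 1).contDiff
  exact ((c0.pow 4).add ((contDiff_const.mul (c0.pow 2)).mul (c1.pow 2))).add (c1.pow 4)

lemma num_pos {x v : Fin 2 → ℝ} (hx : x ≠ 0) (hv : v ≠ 0) :
    0 < 2 * (x 0 ^ 4 + 3 * x 0 ^ 2 * x 1 ^ 2 + x 1 ^ 4) *
          ((12 * x 0 ^ 2 + 6 * x 1 ^ 2) * v 0 ^ 2 + 24 * x 0 * x 1 * v 0 * v 1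
            + (6 * x 0 ^ 2 + 12 * x 1 ^ 2) * v 1 ^ 2)
        - ((4 * x 0 ^ 3 + 6 * x 0 * x 1 ^ 2) * v 0 + (6 * x 0 ^ 2 * x 1 + 4 * x 1 ^ 3) * v 1) ^ 2 := by
  obtain ⟨i, hi⟩ := Function.ne_iff.mp hx
  obtain ⟨j, hj⟩ := Function.ne_iff.mp hv
  fin_cases i <;> fin_cases j
  · have ha : x 0 ≠ 0 := hi
    have hu : v 0 ≠ 0 := hj
    have h : 0 < (x 0 ^ 3 * v 0) ^ 2 := by positivity
    nlinarith [sq_nonneg (x 0 * x 1 * (x 0 * v 0 + x 1 * v 1)),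
      sq_nonneg (x 0 ^ 2 * x 1 * v 0), sq_nonneg (x 0 * x 1 ^ 2 * v 0), sq_nonneg (x 1 ^ 3 * v 0),
      sq_nonneg (x 0 ^ 3 * v 1), sq_nonneg (x 0 ^ 2 * x 1 * v 1), sq_nonneg (x 0 * x 1 ^ 2 * v 1),
      sq_nonneg (x 1 ^ 3 * v 1)]
  · have ha : x 0 ≠ 0 := hi
    have hu : v 1 ≠ 0 := hj
    have h : 0 < (x 0 ^ 3 * v 1) ^ 2 := by positivity
    nlinarith [sq_nonneg (x 0 * x 1 * (x 0 * v 0 + x 1 * v 1)),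
      sq_nonneg (x 0 ^ 2 * x 1 * v 0), sq_nonneg (x 0 * x 1 ^ 2 * v 0), sq_nonneg (x 1 ^ 3 * v 0),
      sq_nonneg (x 0 ^ 3 * v 0), sq_nonneg (x 0 ^ 2 * x 1 * v 1), sq_nonneg (x 0 * x 1 ^ 2 * v 1),
      sq_nonneg (x 1 ^ 3 * v 1)]
  · have ha : x 1 ≠ 0 := hi
    have hu : v 0 ≠ 0 := hj
    have h : 0 < (x 1 ^ 3 * v 0) ^ 2 := by positivity
    nlinarith [sq_nonneg (x 0 * x 1 * (x 0 * v 0 + x 1 * v 1)),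
      sq_nonneg (x 0 ^ 2 * x 1 * v 0), sq_nonneg (x 0 * x 1 ^ 2 * v 0), sq_nonneg (x 0 ^ 3 * v 0),
      sq_nonneg (x 0 ^ 3 * v 1), sq_nonneg (x 0 ^ 2 * x 1 * v 1), sq_nonneg (x 0 * x 1 ^ 2 * v 1),
      sq_nonneg (x 1 ^ 3 * v 1)]
  · have ha : x 1 ≠ 0 := hi
    have hu : v 1 ≠ 0 := hj
    have h : 0 < (x 1 ^ 3 * v 1) ^ 2 := by positivity
    nlinarith [sq_nonneg (x 0 * x 1 * (x 0 * v 0 + x 1 * v 1)),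
      sq_nonneg (x 0 ^ 2 * x 1 * v 0), sq_nonneg (x 0 * x 1 ^ 2 * v 0), sq_nonneg (x 1 ^ 3 * v 0),
      sq_nonneg (x 0 ^ 3 * v 1), sq_nonneg (x 0 ^ 2 * x 1 * v 1), sq_nonneg (x 0 * x 1 ^ 2 * v 1),
      sq_nonneg (x 0 ^ 3 * v 0)]

lemma hess_pos {x v : Fin 2 → ℝ} (hx : x ≠ 0) (hv : v ≠ 0) :
    0 < iteratedFDeriv ℝ 2
        (fun z : Fin 2 → ℝ => Real.sqrt (z 0 ^ 4 + 3 * z 0 ^ 2 * z 1 ^ 2 + z 1 ^ 4)) x ![v, v] := by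
  have hQx : 0 < x 0 ^ 4 + 3 * x 0 ^ 2 * x 1 ^ 2 + x 1 ^ 4 := qf_pos hx
  have hs : 0 < Real.sqrt (x 0 ^ 4 + 3 * x 0 ^ 2 * x 1 ^ 2 + x 1 ^ 4) := Real.sqrt_pos.mpr hQx
  -- fderiv of g applied to v equals the pretty function F, near x
  have hgder : ∀ y : Fin 2 → ℝ, y ≠ 0 →
      fderiv ℝ (fun z : Fin 2 → ℝ => Real.sqrt (z 0 ^ 4 + 3 * z 0 ^ 2 * z 1 ^ 2 + z 1 ^ 4)) y v
        = ((4 * y 0 ^ 3 + 6 * y 0 * y 1 ^ 2) * v 0 + (6 * y 0 ^ 2 * y 1 + 4 * y 1 ^ 3) * v 1)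
            * (2 * Real.sqrt (y 0 ^ 4 + 3 * y 0 ^ 2 * y 1 ^ 2 + y 1 ^ 4))⁻¹ := by
    intro y hy
    rw [((qf_hasFDerivAt y).sqrt (qf_pos hy).ne').fderiv]
    simp only [ContinuousLinearMap.coe_smul', Pi.smul_apply, ContinuousLinearMap.add_apply,
      ContinuousLinearMap.smul_apply, ContinuousLinearMap.proj_apply, smul_eq_mul, pj]
    field_simp
  have hgC2 : ContDiffAt ℝ 2
      (fun z : Fin 2 → ℝ => Real.sqrt (z 0 ^ 4 + 3 * z 0 ^ 2 * z 1 ^ 2 + z 1 ^ 4)) x :=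
    (Real.contDiffAt_sqrt hQx.ne').comp x qf_contDiff.contDiffAt
  have hdfd : DifferentiableAt ℝ
      (fderiv ℝ (fun z : Fin 2 → ℝ => Real.sqrt (z 0 ^ 4 + 3 * z 0 ^ 2 * z 1 ^ 2 + z 1 ^ 4))) x :=
    (hgC2.fderiv_right (m := 1) (by norm_num)).differentiableAt one_ne_zero
  rw [iteratedFDeriv_two_apply]
  simp only [Matrix.cons_val_zero, Matrix.cons_val_one, Matrix.head_cons]
  -- swap: second fderiv applied twice = fderiv of (fderiv · v)
  have h6 : fderiv ℝ (fun y : Fin 2 → ℝ =>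
        fderiv ℝ (fun z : Fin 2 → ℝ => Real.sqrt (z 0 ^ 4 + 3 * z 0 ^ 2 * z 1 ^ 2 + z 1 ^ 4)) y v) x
      = (fderiv ℝ (fderiv ℝ (fun z : Fin 2 → ℝ =>
          Real.sqrt (z 0 ^ 4 + 3 * z 0 ^ 2 * z 1 ^ 2 + z 1 ^ 4))) x).flip v := by
    rw [fderiv_clm_apply hdfd (differentiableAt_const v)]
    simp
  have hEq : (fun y : Fin 2 → ℝ =>
        fderiv ℝ (fun z : Fin 2 → ℝ => Real.sqrt (z 0 ^ 4 + 3 * z 0 ^ 2 * z 1 ^ 2 + z 1 ^ 4)) y v)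
      =ᶠ[nhds x] fun y : Fin 2 → ℝ =>
        ((4 * y 0 ^ 3 + 6 * y 0 * y 1 ^ 2) * v 0 + (6 * y 0 ^ 2 * y 1 + 4 * y 1 ^ 3) * v 1)
          * (2 * Real.sqrt (y 0 ^ 4 + 3 * y 0 ^ 2 * y 1 ^ 2 + y 1 ^ 4))⁻¹ := by
    filter_upwards [isOpen_compl_singleton.mem_nhds hx] with y hy
    exact hgder y hy
  have h7 := hEq.fderiv_eq (𝕜 := ℝ)
  -- derivative of the inverse of the denominator
  have hden := ((qf_hasFDerivAt x).sqrt hQx.ne').const_mul 2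
  have hinv := (hasDerivAt_inv (by positivity :
      2 * Real.sqrt (x 0 ^ 4 + 3 * x 0 ^ 2 * x 1 ^ 2 + x 1 ^ 4) ≠ 0)).comp_hasFDerivAt x hden
  have hFraw := (nf_hasFDerivAt v x).mul hinv
  have hF : HasFDerivAt (fun y : Fin 2 → ℝ =>
        ((4 * y 0 ^ 3 + 6 * y 0 * y 1 ^ 2) * v 0 + (6 * y 0 ^ 2 * y 1 + 4 * y 1 ^ 3) * v 1)
          * (2 * Real.sqrt (y 0 ^ 4 + 3 * y 0 ^ 2 * y 1 ^ 2 + y 1 ^ 4))⁻¹)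
      ((((4 * x 0 ^ 3 + 6 * x 0 * x 1 ^ 2) * v 0 + (6 * x 0 ^ 2 * x 1 + 4 * x 1 ^ 3) * v 1) •
          (-((2 * Real.sqrt (x 0 ^ 4 + 3 * x 0 ^ 2 * x 1 ^ 2 + x 1 ^ 4)) ^ 2)⁻¹ •
            (2 : ℝ) •
              (1 / (2 * Real.sqrt (x 0 ^ 4 + 3 * x 0 ^ 2 * x 1 ^ 2 + x 1 ^ 4))) •
                ((4 * x 0 ^ 3 + 6 * x 0 * x 1 ^ 2) • pj 0 + (6 * x 0 ^ 2 * x 1 + 4 * x 1 ^ 3) • pj 1)))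
        + (2 * Real.sqrt (x 0 ^ 4 + 3 * x 0 ^ 2 * x 1 ^ 2 + x 1 ^ 4))⁻¹ •
            (((12 * x 0 ^ 2 + 6 * x 1 ^ 2) * v 0 + 12 * x 0 * x 1 * v 1) • pj 0 +
              (12 * x 0 * x 1 * v 0 + (6 * x 0 ^ 2 + 12 * x 1 ^ 2) * v 1) • pj 1)) x := hFraw
  have hgoal : fderiv ℝ (fderiv ℝ (fun z : Fin 2 → ℝ =>
        Real.sqrt (z 0 ^ 4 + 3 * z 0 ^ 2 * z 1 ^ 2 + z 1 ^ 4))) x v v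
      = (fderiv ℝ (fun y : Fin 2 → ℝ =>
          ((4 * y 0 ^ 3 + 6 * y 0 * y 1 ^ 2) * v 0 + (6 * y 0 ^ 2 * y 1 + 4 * y 1 ^ 3) * v 1)
            * (2 * Real.sqrt (y 0 ^ 4 + 3 * y 0 ^ 2 * y 1 ^ 2 + y 1 ^ 4))⁻¹) x) v := by
    rw [← h7, h6]
    simp
  rw [hgoal, hF.fderiv]
  simp only [ContinuousLinearMap.add_apply, ContinuousLinearMap.smul_apply,
    ContinuousLinearMap.coe_smul', Pi.smul_apply, ContinuousLinearMap.proj_apply,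
    smul_eq_mul, pj]
  set s := Real.sqrt (x 0 ^ 4 + 3 * x 0 ^ 2 * x 1 ^ 2 + x 1 ^ 4) with hsdef
  have hs2 : s * s = x 0 ^ 4 + 3 * x 0 ^ 2 * x 1 ^ 2 + x 1 ^ 4 := Real.mul_self_sqrt hQx.le
  have hkey : ((4 * x 0 ^ 3 + 6 * x 0 * x 1 ^ 2) * v 0 + (6 * x 0 ^ 2 * x 1 + 4 * x 1 ^ 3) * v 1) *
        (-((2 * s) ^ 2)⁻¹ *
          (2 * (1 / (2 * s) *
              ((4 * x 0 ^ 3 + 6 * x 0 * x 1 ^ 2) * v 0 + (6 * x 0 ^ 2 * x 1 + 4 * x 1 ^ 3) * v 1)))) +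
      (2 * s)⁻¹ *
        (((12 * x 0 ^ 2 + 6 * x 1 ^ 2) * v 0 + 12 * x 0 * x 1 * v 1) * v 0 +
          (12 * x 0 * x 1 * v 0 + (6 * x 0 ^ 2 + 12 * x 1 ^ 2) * v 1) * v 1)
      = (2 * (x 0 ^ 4 + 3 * x 0 ^ 2 * x 1 ^ 2 + x 1 ^ 4) *
          ((12 * x 0 ^ 2 + 6 * x 1 ^ 2) * v 0 ^ 2 + 24 * x 0 * x 1 * v 0 * v 1
            + (6 * x 0 ^ 2 + 12 * x 1 ^ 2) * v 1 ^ 2)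
        - ((4 * x 0 ^ 3 + 6 * x 0 * x 1 ^ 2) * v 0 + (6 * x 0 ^ 2 * x 1 + 4 * x 1 ^ 3) * v 1) ^ 2)
          / (4 * s ^ 3) := by
    rw [← hs2]
    field_simp
    ring
  rw [hkey]
  exact div_pos (num_pos hx hv) (by positivity)


/- STATEMENT 12: the function H(x₁,x₂) = (x₁⁴ + 3x₁²x₂² + x₂⁴)^{1/4} on ℝ² is a Finsler
   norm: C² away from 0, positive away from 0, absolutely 1-homogeneous, and the Hessian
   of H² (= √(x₁⁴ + 3x₁²x₂² + x₂⁴)) is positive definite at every point of ℝ² \ {0}. -/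
theorem quartic_function_is_finsler_norm
    (H : (Fin 2 → ℝ) → ℝ)
    (hH : ∀ x : Fin 2 → ℝ,
      H x = (x 0 ^ 4 + 3 * x 0 ^ 2 * x 1 ^ 2 + x 1 ^ 4) ^ ((1 : ℝ) / 4)) :
    -- H is C² away from the origin
    ContDiffOn ℝ 2 H {(0 : Fin 2 → ℝ)}ᶜ ∧
    -- H is positive away from the origin
    (∀ x : Fin 2 → ℝ, x ≠ 0 → 0 < H x) ∧
    -- H is absolutely 1-homogeneous
    (∀ x : Fin 2 → ℝ, ∀ s : ℝ, H (s • x) = |s| * H x) ∧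
    -- the Hessian of H² is positive definite on ℝ² \ {0}
    (∀ x : Fin 2 → ℝ, x ≠ 0 → ∀ v : Fin 2 → ℝ, v ≠ 0 →
      0 < iteratedFDeriv ℝ 2 (fun z => (H z) ^ 2) x ![v, v]) := by
  have hHfun : H = fun x : Fin 2 → ℝ =>
      (x 0 ^ 4 + 3 * x 0 ^ 2 * x 1 ^ 2 + x 1 ^ 4) ^ ((1 : ℝ) / 4) := funext hH
  subst hHfun
  refine ⟨?_, ?_, ?_, ?_⟩
  · intro x hx
    have hx' : x ≠ 0 := hx
    exact ((Real.contDiffAt_rpow_const_of_ne (qf_pos hx').ne').comp x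
      qf_contDiff.contDiffAt).contDiffWithinAt
  · intro x hx
    exact Real.rpow_pos_of_pos (qf_pos hx) _
  · intro x s
    simp only [Pi.smul_apply, smul_eq_mul]
    have habs : |s| ^ 4 = s ^ 4 := by rw [← abs_pow]; exact abs_of_nonneg (by positivity)
    have h1 : (s * x 0) ^ 4 + 3 * (s * x 0) ^ 2 * (s * x 1) ^ 2 + (s * x 1) ^ 4
        = |s| ^ 4 * (x 0 ^ 4 + 3 * x 0 ^ 2 * x 1 ^ 2 + x 1 ^ 4) := by rw [habs]; ring
    rw [h1, Real.mul_rpow (by positivity) (by positivity)]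
    congr 1
    rw [← Real.rpow_natCast |s| 4, ← Real.rpow_mul (abs_nonneg s)]
    norm_num
  · intro x hx v hv
    have he : (fun z : Fin 2 → ℝ =>
          ((z 0 ^ 4 + 3 * z 0 ^ 2 * z 1 ^ 2 + z 1 ^ 4) ^ ((1 : ℝ) / 4)) ^ 2)
        = fun z : Fin 2 → ℝ => Real.sqrt (z 0 ^ 4 + 3 * z 0 ^ 2 * z 1 ^ 2 + z 1 ^ 4) := by
      funext z
      have h0 : (0 : ℝ) ≤ z 0 ^ 4 + 3 * z 0 ^ 2 * z 1 ^ 2 + z 1 ^ 4 := by positivity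
      rw [← Real.rpow_natCast (_ ^ ((1 : ℝ) / 4)) 2, ← Real.rpow_mul h0, Real.sqrt_eq_rpow]
      norm_num
    beta_reduce
    rw [he]
    exact hess_pos hx hv
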